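/- For any real u ≠ 1 and integers q ≥ 0, m ≥ 0, the identity 1/(1−u)^{q+1} = Σ_{k=0}^{m} ((q+k)!/(q!·k!)) u^k + u^m Σ_{k=1}^{q+1} C(q+1+m, k+m) (u/(1−u))^k holds, where C(·,·) denotes binomial coefficients. -/

import Mathlib

open Finset in
theorem key (u : ℝ) (hu : u ≠ 1) (q m : ℕ) :
    u * (((q + m + 1).choose (m + 1) : ℝ)
        + ∑ k ∈ Icc 1 (q + 1), ((q + m + 2).choose (k + m + 1) : ℝ) * (u / (1 - u)) ^ k)
      = ∑ k ∈ Icc 1 (q + 1), ((q + 1 + m).choose (k + m) : ℝ) * (u / (1 - u)) ^ k := by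
  have h1 : (1 : ℝ) - u ≠ 0 := sub_ne_zero.mpr hu.symm
  set x : ℝ := u / (1 - u) with hxdef
  have hx : (1 - u) * x = u := by
    rw [hxdef, mul_comm, div_mul_cancel₀ _ h1]
  have hsplit : ∀ k ∈ Icc 1 (q + 1),
      ((q + m + 2).choose (k + m + 1) : ℝ) * x ^ k
        = ((q + 1 + m).choose (k + m) : ℝ) * x ^ k
          + ((q + m + 1).choose (k + m + 1) : ℝ) * x ^ k := by
    intro k _
    have e1 : q + 1 + m = q + m + 1 := by omega
    rw [e1, Nat.choose_succ_succ (q + m + 1) (k + m)]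
    push_cast; ring
  rw [Finset.sum_congr rfl hsplit, Finset.sum_add_distrib]
  -- now: u * (c + (S + W)) = S  where W top term vanishes
  -- show (1-u) * S = u * (c + W)
  have hSm : (1 - u) * (∑ k ∈ Icc 1 (q + 1), ((q + 1 + m).choose (k + m) : ℝ) * x ^ k)
      = u * (((q + m + 1).choose (m + 1) : ℝ)
          + ∑ k ∈ Icc 1 (q + 1), ((q + m + 1).choose (k + m + 1) : ℝ) * x ^ k) := by
    rw [Finset.mul_sum, mul_add, Finset.mul_sum]
    rw [← Finset.Ico_add_one_right_eq_Icc, Finset.sum_Ico_eq_sum_range, Finset.sum_Ico_eq_sum_range]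
    simp only [Nat.succ_sub_one, Nat.add_sub_cancel]
    -- left: ∑ i in range (q+1), (1-u) * (C(q+1+m, 1+i+m) * x^(1+i))
    -- right: u*c + ∑ i in range (q+1), u * (C(q+m+1, 1+i+m+1) * x^(1+i))
    rw [Finset.sum_range_succ'  -- peel i=0 from left
      (fun i => (1 - u) * (((q + 1 + m).choose (1 + i + m) : ℝ) * x ^ (1 + i))) q]
    rw [Finset.sum_range_succ  -- peel i=q from right sum
      (fun i => u * (((q + m + 1).choose (1 + i + m + 1) : ℝ) * x ^ (1 + i))) q]
    have htop : (q + m + 1).choose (1 + q + m + 1) = 0 :=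
      Nat.choose_eq_zero_of_lt (by omega)
    have hc : (q + 1 + m).choose (1 + 0 + m) = (q + m + 1).choose (m + 1) := by
      congr 1 <;> omega
    have hterm0 : (1 - u) * (((q + 1 + m).choose (1 + 0 + m) : ℝ) * x ^ (1 + 0))
        = u * ((q + m + 1).choose (m + 1) : ℝ) := by
      rw [hc]
      linear_combination (((q + m + 1).choose (m + 1) : ℝ)) * hx
    rw [htop, hterm0]
    push_cast
    have hrest : ∀ i ∈ Finset.range q,
        (1 - u) * (((q + 1 + m).choose (1 + (i + 1) + m) : ℝ) * x ^ (1 + (i + 1)))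
          = u * (((q + m + 1).choose (1 + i + m + 1) : ℝ) * x ^ (1 + i)) := by
      intro i _
      have e2 : 1 + (i + 1) + m = 1 + i + m + 1 := by omega
      have e3 : q + 1 + m = q + m + 1 := by omega
      rw [e2, e3]
      linear_combination (((q + m + 1).choose (1 + i + m + 1) : ℝ) * x ^ (1 + i)) * hx
    rw [Finset.sum_congr rfl hrest]
    ring
  linear_combination -hSm

/-- For real `u ≠ 1` and integers `q, m ≥ 0`,
`1/(1−u)^{q+1} = Σ_{k=0}^{m} ((q+k)!/(q!·k!)) u^k
  + u^m Σ_{k=1}^{q+1} C(q+1+m, k+m) (u/(1−u))^k`. -/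
theorem stmt_19 (u : ℝ) (hu : u ≠ 1) (q m : ℕ) :
    1 / (1 - u) ^ (q + 1) =
      (∑ k ∈ Finset.range (m + 1),
        (((q + k).factorial : ℝ) / ((q.factorial : ℝ) * (k.factorial : ℝ))) * u ^ k) +
      u ^ m * ∑ k ∈ Finset.Icc 1 (q + 1),
        ((q + 1 + m).choose (k + m) : ℝ) * (u / (1 - u)) ^ k := by
  have h1 : (1 : ℝ) - u ≠ 0 := sub_ne_zero.mpr hu.symm
  induction m with
  | zero =>
      have hq : (q.factorial : ℝ) ≠ 0 := Nat.cast_ne_zero.mpr q.factorial_ne_zero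
      simp only [Finset.sum_range_one, Nat.add_zero, Nat.factorial_zero, Nat.cast_one,
        mul_one, pow_zero, one_mul, div_self hq, zero_add]
      have hx1 : u / (1 - u) + 1 = 1 / (1 - u) := by field_simp; ring
      calc 1 / (1 - u) ^ (q + 1)
          = (u / (1 - u) + 1) ^ (q + 1) := by
            rw [hx1, div_pow, one_pow]
        _ = ∑ k ∈ Finset.range (q + 1 + 1),
              (u / (1 - u)) ^ k * 1 ^ (q + 1 - k) * ((q + 1).choose k : ℝ) :=
            add_pow (u / (1 - u)) 1 (q + 1)
        _ = 1 + ∑ k ∈ Finset.Icc 1 (q + 1), ((q + 1).choose k : ℝ)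
              * (u / (1 - u)) ^ k := by
            rw [Finset.sum_range_succ']
            rw [← Finset.Ico_add_one_right_eq_Icc, Finset.sum_Ico_eq_sum_range]
            simp only [Nat.succ_sub_one, Nat.add_sub_cancel, pow_zero, one_pow, one_mul, mul_one,
              Nat.choose_zero_right, Nat.cast_one]
            rw [add_comm]
            congr 1
            apply Finset.sum_congr rfl
            intro i _
            have e : 1 + i = i + 1 := by omega
            rw [e]
            ring
  | succ m ih =>
      rw [Finset.sum_range_succ, ih]
      have hc : (((q + (m + 1)).factorial : ℝ) / ((q.factorial : ℝ) * (((m + 1)).factorial : ℝ)))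
          = ((q + m + 1).choose (m + 1) : ℝ) := by
        rw [Nat.cast_choose ℝ (by omega : m + 1 ≤ q + m + 1)]
        have e1 : q + m + 1 - (m + 1) = q := by omega
        have e2 : q + (m + 1) = q + m + 1 := by omega
        rw [e1, e2]; ring
      have hs : ∑ k ∈ Finset.Icc 1 (q + 1),
            ((q + 1 + (m + 1)).choose (k + (m + 1)) : ℝ) * (u / (1 - u)) ^ k
          = ∑ k ∈ Finset.Icc 1 (q + 1),
            ((q + m + 2).choose (k + m + 1) : ℝ) * (u / (1 - u)) ^ k := by
        apply Finset.sum_congr rfl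
        intro k _
        have e1 : q + 1 + (m + 1) = q + m + 2 := by omega
        have e2 : k + (m + 1) = k + m + 1 := by omega
        rw [e1, e2]
      rw [hs, hc]
      have hk := key u hu q m
      linear_combination (-(u ^ m)) * hk
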